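/- Let X₁, …, Xₙ be independent identically distributed random variables taking values in a measurable space S, each with law μ, and let A₁, …, A_m be pairwise disjoint measurable subsets of S with μ(A_j) ≤ p for every j, where p ≥ 0. Then the probability that every set A_j contains at least one of the points X₁, …, Xₙ (i.e., P(⋂_{j=1}^{m} ⋃_{i=1}^{n} {X_i ∈ A_j})) is at most (n·p)^m. -/

import Mathlib

open MeasureTheory ProbabilityTheory

/-- If `X₁, …, Xₙ` are i.i.d. random variables with common law `μ` on `S`, and
`A₁, …, A_m` are pairwise disjoint measurable subsets of `S` with `μ (A j) ≤ p` for
every `j` (`p ≥ 0`), then the probability that every `A j` contains at least one of the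
points `X i` is at most `(n·p)^m`. -/
theorem stmt_4 {Ω S : Type*} [MeasurableSpace Ω] [MeasurableSpace S]
    (P : Measure Ω) [IsProbabilityMeasure P] (μ : Measure S)
    (n m : ℕ) (X : Fin n → Ω → S)
    (hmeas : ∀ i, Measurable (X i))
    (hindep : iIndepFun X P)
    (hlaw : ∀ i, Measure.map (X i) P = μ)
    (A : Fin m → Set S) (hA : ∀ j, MeasurableSet (A j))
    (hdisj : Pairwise (Function.onFun Disjoint A))
    (p : ℝ) (hp : 0 ≤ p) (hAp : ∀ j, μ (A j) ≤ ENNReal.ofReal p) :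
    P (⋂ j : Fin m, ⋃ i : Fin n, {ω | X i ω ∈ A j}) ≤
      ENNReal.ofReal ((n * p) ^ m) := by
  rcases Nat.eq_zero_or_pos m with hm | hm
  · subst hm
    simp
  have : Nonempty (Fin m) := ⟨⟨0, hm⟩⟩
  -- distribute intersection over union
  have hdist : (⋂ j : Fin m, ⋃ i : Fin n, {ω | X i ω ∈ A j}) =
      ⋃ f : Fin m → Fin n, ⋂ j : Fin m, {ω | X (f j) ω ∈ A j} := by
    exact iInf_iSup_eq
  rw [hdist]
  -- probability of each piece
  have hpiece : ∀ f : Fin m → Fin n,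
      P (⋂ j : Fin m, {ω | X (f j) ω ∈ A j}) ≤ (ENNReal.ofReal p) ^ m := by
    intro f
    by_cases hf : Function.Injective f
    · -- rewrite as biInter over the image of f
      set g := Function.invFun f with hg
      have hgf : ∀ j, g (f j) = j := fun j => Function.leftInverse_invFun hf j
      have hrw : (⋂ j : Fin m, {ω | X (f j) ω ∈ A j}) =
          ⋂ i ∈ Finset.image f Finset.univ, X i ⁻¹' (A (g i)) := by
        ext ω
        simp only [Set.mem_iInter, Set.mem_setOf_eq, Finset.mem_image, Finset.mem_univ,
          true_and, Set.mem_preimage]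
        constructor
        · rintro h i ⟨j, rfl⟩
          rw [hgf]; exact h j
        · intro h j
          have := h (f j) ⟨j, rfl⟩
          rwa [hgf] at this
      rw [hrw]
      rw [hindep.meas_biInter (S := Finset.image f Finset.univ)
        (s := fun i => X i ⁻¹' (A (g i))) (fun i _ => ⟨A (g i), hA _, rfl⟩)]
      have hcard : (Finset.image f Finset.univ).card = m := by
        rw [Finset.card_image_of_injective _ hf, Finset.card_univ, Fintype.card_fin]
      calc ∏ i ∈ Finset.image f Finset.univ, P (X i ⁻¹' (A (g i)))
          ≤ ∏ _i ∈ Finset.image f Finset.univ, ENNReal.ofReal p := by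
            refine Finset.prod_le_prod' fun i _ => ?_
            have : P (X i ⁻¹' (A (g i))) = μ (A (g i)) := by
              rw [← hlaw i, Measure.map_apply (hmeas i) (hA _)]
            rw [this]; exact hAp _
        _ = (ENNReal.ofReal p) ^ m := by rw [Finset.prod_const, hcard]
    · -- non-injective: the set is empty
      obtain ⟨j, j', hne, hval⟩ : ∃ j j', j ≠ j' ∧ f j = f j' := by
        simp only [Function.Injective, not_forall] at hf
        obtain ⟨j, j', h1, h2⟩ := hf
        exact ⟨j, j', h2, h1⟩
      have : (⋂ j : Fin m, {ω | X (f j) ω ∈ A j}) = ∅ := by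
        ext ω
        simp only [Set.mem_iInter, Set.mem_setOf_eq, Set.mem_empty_iff_false, iff_false,
          not_forall]
        by_contra h
        push_neg at h
        have h1 := h j
        have h2 := h j'
        rw [hval] at h1
        exact (hdisj hne).le_bot ⟨h1, h2⟩
      rw [this]
      simp
  calc P (⋃ f : Fin m → Fin n, ⋂ j : Fin m, {ω | X (f j) ω ∈ A j})
      ≤ ∑' f : Fin m → Fin n, P (⋂ j : Fin m, {ω | X (f j) ω ∈ A j}) :=
        measure_iUnion_le _
    _ ≤ ∑' _f : Fin m → Fin n, (ENNReal.ofReal p) ^ m := ENNReal.tsum_le_tsum hpiece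
    _ = (Fintype.card (Fin m → Fin n) : ENNReal) * (ENNReal.ofReal p) ^ m := by
        rw [tsum_eq_sum (s := Finset.univ) (by simp), Finset.sum_const, Finset.card_univ,
          nsmul_eq_mul]
    _ = ENNReal.ofReal ((n * p) ^ m) := by
        rw [Fintype.card_fun, Fintype.card_fin, Fintype.card_fin]
        rw [ENNReal.ofReal_pow (by positivity), ENNReal.ofReal_mul (by positivity),
          mul_pow, ENNReal.ofReal_natCast, Nat.cast_pow]
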